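/- A set D ⊆ V(G) is an efficient dominating set of G with D ∩ S = S' if and only if there exist vertices v_1 ∈ V(C_1), …, v_p ∈ V(C_p) such that: (i) D = S' ∪ {v_1, …, v_p}; (ii) U is the disjoint union of the sets N[v_i] ∩ U for i = 1, …, p; and (iii) for every i ∈ {1, …, p}, V(C_i) ⊆ N[v_i] ∪ N[S'] and N[v_i] ∩ N[S'] = ∅. -/

import Mathlib

/-- The closed neighborhood `N[v]` of a vertex `v`. -/
def closedNbhd {V : Type*} (G : SimpleGraph V) (v : V) : Set V :=
  {w | G.Adj v w ∨ w = v}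

/-- The closed neighborhood `N[X] = ⋃_{v ∈ X} N[v]` of a set of vertices. -/
def closedNbhdSet {V : Type*} (G : SimpleGraph V) (X : Set V) : Set V :=
  ⋃ v ∈ X, closedNbhd G v

/-- `D` is an efficient dominating set of `G`: every vertex has exactly one
element of `D` in its closed neighborhood, i.e. `|N[v] ∩ D| = 1`. -/
def IsEDS {V : Type*} (G : SimpleGraph V) (D : Set V) : Prop :=
  ∀ v : V, ∃! u : V, u ∈ D ∧ u ∈ closedNbhd G v

/-- The graph `G - S`: the graph obtained from `G` by deleting the vertices of `S`
(kept on the same vertex type; vertices of `S` become isolated). -/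
def deleteSet {V : Type*} (G : SimpleGraph V) (S : Set V) : SimpleGraph V where
  Adj v w := G.Adj v w ∧ v ∉ S ∧ w ∉ S
  symm := by
    constructor
    intro v w h
    exact ⟨h.1.symm, h.2.2, h.2.1⟩
  loopless := by
    constructor
    intro v h
    exact G.irrefl h.1

lemma mem_cn {V : Type*} {G : SimpleGraph V} {v w : V} :
    w ∈ closedNbhd G v ↔ G.Adj v w ∨ w = v := Iff.rfl

lemma cn_comm {V : Type*} {G : SimpleGraph V} {v w : V} :
    w ∈ closedNbhd G v ↔ v ∈ closedNbhd G w := by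
  constructor <;> rintro (h | h)
  · exact Or.inl h.symm
  · exact Or.inr h.symm
  · exact Or.inl h.symm
  · exact Or.inr h.symm

lemma self_mem_cn {V : Type*} {G : SimpleGraph V} {v : V} :
    v ∈ closedNbhd G v := Or.inr rfl

lemma mem_cns {V : Type*} {G : SimpleGraph V} {X : Set V} {x : V} :
    x ∈ closedNbhdSet G X ↔ ∃ s ∈ X, x ∈ closedNbhd G s := by
  simp [closedNbhdSet]

/-- Setup: `S ⊆ V(G)` is such that the connected components of `G - S` are
`C 0, …, C (p-1)`, each of diameter at most 2; `S' ⊆ S` has pairwise disjoint closed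
neighborhoods; `U = S \ N[S']`, and no `C i` is contained in `N[S']`.
Then `D ⊆ V(G)` is an efficient dominating set of `G` with `D ∩ S = S'` if and only
if there exist vertices `v i ∈ C i` such that:
(i) `D = S' ∪ {v 0, …, v (p-1)}`;
(ii) `U` is the disjoint union of the sets `N[v i] ∩ U`;
(iii) for every `i`, `C i ⊆ N[v i] ∪ N[S']` and `N[v i] ∩ N[S'] = ∅`. -/
theorem eds_partial_solution_extension {V : Type*} [Fintype V] (G : SimpleGraph V)
    (p : ℕ) (S S' U D : Set V) (C : Fin p → Set V)
    (hS'S : S' ⊆ S)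
    (hS'disj : ∀ s ∈ S', ∀ t ∈ S', s ≠ t → closedNbhd G s ∩ closedNbhd G t = ∅)
    (hU : U = S \ closedNbhdSet G S')
    (hCcomp : ∀ i, ∃ K : (deleteSet G S).ConnectedComponent, C i = K.supp)
    (hCS : ∀ i, C i ∩ S = ∅)
    (hCcover : (⋃ i, C i) = Sᶜ)
    (hCdisj : ∀ i j, i ≠ j → C i ∩ C j = ∅)
    (hCdiam : ∀ i, ∀ v ∈ C i, ∀ w ∈ C i,
      v = w ∨ (deleteSet G S).Adj v w ∨
        ∃ x, (deleteSet G S).Adj v x ∧ (deleteSet G S).Adj x w)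
    (hCnot : ∀ i, ¬ (C i ⊆ closedNbhdSet G S')) :
    (IsEDS G D ∧ D ∩ S = S') ↔
      ∃ v : Fin p → V, (∀ i, v i ∈ C i) ∧
        D = S' ∪ Set.range v ∧
        (U = ⋃ i, (closedNbhd G (v i) ∩ U)) ∧
        (∀ i j, i ≠ j →
          (closedNbhd G (v i) ∩ U) ∩ (closedNbhd G (v j) ∩ U) = ∅) ∧
        (∀ i, C i ⊆ closedNbhd G (v i) ∪ closedNbhdSet G S' ∧
          closedNbhd G (v i) ∩ closedNbhdSet G S' = ∅) := by
  -- `b` adjacent-or-equal to `a ∈ C i`, with `b ∉ S`, lies in `C i`.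
  have hCompClosed : ∀ (i : Fin p) (a b : V), a ∈ C i → b ∉ S →
      (b = a ∨ G.Adj a b) → b ∈ C i := by
    intro i a b ha hbS hab
    have haS : a ∉ S := fun h =>
      Set.eq_empty_iff_forall_notMem.mp (hCS i) a ⟨ha, h⟩
    obtain ⟨K, hK⟩ := hCcomp i
    rw [hK] at ha ⊢
    rcases hab with rfl | hadj
    · exact ha
    · have hadj' : (deleteSet G S).Adj a b := ⟨hadj, haS, hbS⟩
      rw [SimpleGraph.ConnectedComponent.mem_supp_iff] at ha ⊢
      rw [← SimpleGraph.ConnectedComponent.sound hadj'.reachable]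
      exact ha
  constructor
  · rintro ⟨hEDS, hDS⟩
    -- find the vertex `v i` in each component
    have hvex : ∀ i : Fin p, ∃ d, d ∈ D ∧ d ∈ C i := by
      intro i
      obtain ⟨w, hwC, hwN⟩ := Set.not_subset.mp (hCnot i)
      obtain ⟨d, ⟨hdD, hdN⟩, _⟩ := hEDS w
      have hdS : d ∉ S := by
        intro h
        have hdS' : d ∈ S' := hDS ▸ ⟨hdD, h⟩
        exact hwN (mem_cns.mpr ⟨d, hdS', cn_comm.mp hdN⟩)
      refine ⟨d, hdD, hCompClosed i w d hwC hdS ?_⟩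
      rcases hdN with h | h
      · exact Or.inr h
      · exact Or.inl h
    choose v hvD hvC using hvex
    -- only one `D`-vertex per component
    have hCD : ∀ i, ∀ d ∈ D, d ∈ C i → d = v i := by
      intro i d hdD hdC
      by_contra hne
      rcases hCdiam i d hdC (v i) (hvC i) with heq | hadj | ⟨x, hx1, hx2⟩
      · exact hne heq
      · obtain ⟨u, _, huniq⟩ := hEDS (v i)
        exact hne ((huniq d ⟨hdD, Or.inl hadj.1.symm⟩).trans
          (huniq (v i) ⟨hvD i, self_mem_cn⟩).symm)
      · obtain ⟨u, _, huniq⟩ := hEDS x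
        exact hne ((huniq d ⟨hdD, Or.inl hx1.1.symm⟩).trans
          (huniq (v i) ⟨hvD i, Or.inl hx2.1⟩).symm)
    refine ⟨v, hvC, ?_, ?_, ?_, ?_⟩
    · -- (i) D = S' ∪ range v
      apply Set.Subset.antisymm
      · intro d hdD
        by_cases hdS : d ∈ S
        · exact Or.inl (hDS ▸ ⟨hdD, hdS⟩)
        · obtain ⟨i, hdC⟩ := Set.mem_iUnion.mp
            (hCcover ▸ (Set.mem_compl hdS : d ∈ Sᶜ))
          exact Or.inr ⟨i, (hCD i d hdD hdC).symm⟩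
      · rintro d (hdS' | ⟨i, rfl⟩)
        · exact (hDS ▸ hdS' : d ∈ D ∩ S).1
        · exact hvD i
    · -- (ii) U is covered
      apply Set.Subset.antisymm
      · intro u huU
        rw [hU] at huU
        obtain ⟨huS, huN⟩ := huU
        obtain ⟨d, ⟨hdD, hdN⟩, _⟩ := hEDS u
        have hdS : d ∉ S := by
          intro h
          exact huN (mem_cns.mpr ⟨d, hDS ▸ ⟨hdD, h⟩, cn_comm.mp hdN⟩)
        obtain ⟨i, hdC⟩ := Set.mem_iUnion.mp
          (hCcover ▸ (Set.mem_compl hdS : d ∈ Sᶜ))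
        refine Set.mem_iUnion.mpr ⟨i, ?_, hU ▸ ⟨huS, huN⟩⟩
        rw [← hCD i d hdD hdC]
        exact cn_comm.mp hdN
      · intro u huU
        obtain ⟨i, _, h2⟩ := Set.mem_iUnion.mp huU
        exact h2
    · -- (ii) disjointness
      intro i j hij
      rw [Set.eq_empty_iff_forall_notMem]
      rintro u ⟨⟨hui, _⟩, huj, _⟩
      have hvne : v i ≠ v j := by
        intro h
        exact Set.eq_empty_iff_forall_notMem.mp (hCdisj i j hij) (v i)
          ⟨hvC i, h ▸ hvC j⟩
      obtain ⟨d, _, huniq⟩ := hEDS u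
      exact hvne ((huniq (v i) ⟨hvD i, cn_comm.mp hui⟩).trans
        (huniq (v j) ⟨hvD j, cn_comm.mp huj⟩).symm)
    · -- (iii)
      intro i
      constructor
      · intro w hwC
        obtain ⟨d, ⟨hdD, hdN⟩, _⟩ := hEDS w
        by_cases hdS : d ∈ S
        · exact Or.inr (mem_cns.mpr ⟨d, hDS ▸ ⟨hdD, hdS⟩, cn_comm.mp hdN⟩)
        · have hdC : d ∈ C i := hCompClosed i w d hwC hdS
            (by rcases hdN with h | h; exact Or.inr h; exact Or.inl h)
          exact Or.inl (hCD i d hdD hdC ▸ cn_comm.mp hdN)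
      · rw [Set.eq_empty_iff_forall_notMem]
        rintro x ⟨hxv, hxN⟩
        obtain ⟨s, hsS', hxs⟩ := mem_cns.mp hxN
        have hne : v i ≠ s := by
          intro h
          exact Set.eq_empty_iff_forall_notMem.mp (hCS i) (v i)
            ⟨hvC i, h ▸ hS'S hsS'⟩
        obtain ⟨d, _, huniq⟩ := hEDS x
        exact hne ((huniq (v i) ⟨hvD i, cn_comm.mp hxv⟩).trans
          (huniq s ⟨(hDS.symm ▸ hsS' : s ∈ D ∩ S).1, cn_comm.mp hxs⟩).symm)
  · rintro ⟨v, hvC, hD, hUeq, hUdisj, hiii⟩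
    have hvS : ∀ i, v i ∉ S := fun i h =>
      Set.eq_empty_iff_forall_notMem.mp (hCS i) (v i) ⟨hvC i, h⟩
    have hDS : D ∩ S = S' := by
      rw [hD]; ext x
      constructor
      · rintro ⟨hS' | ⟨i, rfl⟩, hS⟩
        · exact hS'
        · exact absurd hS (hvS i)
      · exact fun h => ⟨Or.inl h, hS'S h⟩
    refine ⟨?_, hDS⟩
    intro w
    -- uniqueness: any two D-vertices dominating w are equal
    have huniq : ∀ d ∈ D, ∀ e ∈ D, w ∈ closedNbhd G d → w ∈ closedNbhd G e →
        d = e := by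
      have key : ∀ i : Fin p, w ∈ closedNbhd G (v i) →
          ∀ e ∈ D, w ∈ closedNbhd G e → v i = e := by
        intro i hwi e heD hwe
        have hwNS' : w ∉ closedNbhdSet G S' := fun h =>
          Set.eq_empty_iff_forall_notMem.mp (hiii i).2 w ⟨hwi, h⟩
        rcases hD ▸ heD with heS' | ⟨j, rfl⟩
        · exact absurd (mem_cns.mpr ⟨e, heS', hwe⟩) hwNS'
        · by_cases hij : i = j
          · exact congrArg v hij
          · exfalso
            by_cases hwS : w ∈ S
            · have hwU : w ∈ U := hU ▸ ⟨hwS, hwNS'⟩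
              exact Set.eq_empty_iff_forall_notMem.mp (hUdisj i j hij) w
                ⟨⟨hwi, hwU⟩, hwe, hwU⟩
            · have hwi' : w ∈ C i := hCompClosed i (v i) w (hvC i) hwS
                (by rcases hwi with h | h; exact Or.inr h; exact Or.inl h)
              have hwj' : w ∈ C j := hCompClosed j (v j) w (hvC j) hwS
                (by rcases hwe with h | h; exact Or.inr h; exact Or.inl h)
              exact Set.eq_empty_iff_forall_notMem.mp (hCdisj i j hij) w
                ⟨hwi', hwj'⟩
      intro d hdD e heD hwd hwe
      rcases hD ▸ hdD with hdS' | ⟨i, rfl⟩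
      · rcases hD ▸ heD with heS' | ⟨j, rfl⟩
        · by_contra hne
          exact Set.eq_empty_iff_forall_notMem.mp
            (hS'disj d hdS' e heS' hne) w ⟨hwd, hwe⟩
        · exact (key j hwe d hdD hwd).symm
      · exact key i hwd e heD hwe
    -- existence
    have hex : ∃ d ∈ D, w ∈ closedNbhd G d := by
      by_cases hwN : w ∈ closedNbhdSet G S'
      · obtain ⟨s, hsS', hws⟩ := mem_cns.mp hwN
        exact ⟨s, hD ▸ Or.inl hsS', hws⟩
      · by_cases hwS : w ∈ S
        · have hwU : w ∈ U := hU ▸ ⟨hwS, hwN⟩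
          obtain ⟨i, hwi, _⟩ := Set.mem_iUnion.mp (hUeq ▸ hwU)
          exact ⟨v i, hD ▸ Or.inr ⟨i, rfl⟩, hwi⟩
        · obtain ⟨i, hwC⟩ := Set.mem_iUnion.mp
            (hCcover ▸ (Set.mem_compl hwS : w ∈ Sᶜ))
          rcases (hiii i).1 hwC with h | h
          · exact ⟨v i, hD ▸ Or.inr ⟨i, rfl⟩, h⟩
          · exact absurd h hwN
    obtain ⟨d, hdD, hwd⟩ := hex
    exact ⟨d, ⟨hdD, cn_comm.mpr hwd⟩,
      fun y ⟨hyD, hyN⟩ => huniq y hyD d hdD (cn_comm.mp hyN) hwd⟩
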